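/- Let p_t ∈ (0,1), p_s ∈ (p_t, 1], let D ≥ 1 be an integer, and let w_1, …, w_D ≥ 1 be integer widths. Define q_d = 1 − (1−p_t)^{w_d} and q'_d = 1 − (1−p_s)(1−p_t)^{w_d−1} for each d. Then Y(q') > Y(q); that is, upgrading one token per depth from rate p_t to rate p_s (creating a spine) strictly increases the expected yield of the tree at unchanged node budget (core dominance step of Proposition 3). -/

import Mathlib

/-- Expected yield of a speculation tree with per-depth advance probabilities
`q_1,…,q_D` (0-indexed here as `q 0, …, q (D-1)`):
`Y(q) = 1 + ∑_{d=1}^{D} ∏_{j=1}^{d} q_j`, including the bonus token. -/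
noncomputable def yieldY (D : ℕ) (q : ℕ → ℝ) : ℝ :=
  1 + ∑ d ∈ Finset.range D, ∏ j ∈ Finset.range (d + 1), q j

/-- Core dominance step of Proposition 3: upgrading one token per depth from rate
`p_t` to rate `p_s > p_t` (creating a spine) strictly increases the expected yield
at unchanged node budget: with `q_d = 1 - (1-p_t)^{w_d}` and
`q'_d = 1 - (1-p_s)(1-p_t)^{w_d - 1}`, one has `Y(q') > Y(q)`. -/
theorem spine_upgrade_increases_yield (ps pt : ℝ) (hpt : pt ∈ Set.Ioo (0 : ℝ) 1)
    (hps : ps ∈ Set.Ioc pt 1) (D : ℕ) (hD : 1 ≤ D) (w : ℕ → ℕ)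
    (hw : ∀ d < D, 1 ≤ w d) :
    yieldY D (fun d => 1 - (1 - pt) ^ (w d)) <
      yieldY D (fun d => 1 - (1 - ps) * (1 - pt) ^ (w d - 1)) := by
  obtain ⟨hpt0, hpt1⟩ := hpt
  obtain ⟨hps1, hps2⟩ := hps
  have h1pt0 : (0:ℝ) < 1 - pt := by linarith
  have hle : ∀ d : ℕ, (1 - pt) ^ (w d) ≤ 1 :=
    fun d => pow_le_one₀ (le_of_lt h1pt0) (by linarith)
  have key : ∀ d : ℕ, 1 ≤ w d →
      (1 - ps) * (1 - pt) ^ (w d - 1) < (1 - pt) ^ (w d) := by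
    intro d hd
    have hrw : (1 - pt) ^ (w d) = (1 - pt) * (1 - pt) ^ (w d - 1) := by
      rw [← pow_succ']
      congr 1
      omega
    rw [hrw]
    exact mul_lt_mul_of_pos_right (by linarith) (pow_pos h1pt0 _)
  unfold yieldY
  apply (add_lt_add_iff_left 1).mpr
  apply Finset.sum_lt_sum
  · intro i hi
    apply Finset.prod_le_prod
    · intro j hj
      linarith [hle j]
    · intro j hj
      have hwj : 1 ≤ w j := by
        apply hw
        have := Finset.mem_range.mp hj
        have := Finset.mem_range.mp hi
        omega
      linarith [key j hwj]
  · refine ⟨0, Finset.mem_range.mpr (by omega), ?_⟩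
    simp only [zero_add, Finset.prod_range_one]
    have hw0 : 1 ≤ w 0 := hw 0 (by omega)
    linarith [key 0 hw0]
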